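/- The 7-parameter stress mode of the 5-node transition element satisfies the modified equilibrium relation: for each of the 7 basis tensors τ̂ in the columns of M_7, the modified divergence vanishes, i.e., b_2 ∂_ξ τ̂_{11} − b_1 ∂_η τ̂_{11} + a_1 ∂_η τ̂_{12} − a_2 ∂_ξ τ̂_{12} = 0 and b_2 ∂_ξ τ̂_{12} − b_1 ∂_η τ̂_{12} + a_1 ∂_η τ̂_{22} − a_2 ∂_ξ τ̂_{22} = 0 on [-1,1]². -/

import Mathlib

private lemma deriv_affine (c m x : ℝ) : deriv (fun s => c + m * s) x = m := by
  have h := (((hasDerivAt_id x).const_mul m).const_add c).deriv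
  simpa using h

/-- The 7-parameter stress mode of the 5-node transition element satisfies the modified
equilibrium relation: the modified divergence of the stress vanishes on the reference
square, for every choice of the parameters `β`. -/
theorem transition_stress_mode_equilibrium
    (a1 a2 b1 b2 J0 : ℝ) (hJ0 : J0 = a1 * b2 - a2 * b1) (hJ0ne : J0 ≠ 0)
    (β : Fin 7 → ℝ)
    (τ11 τ22 τ12 : ℝ → ℝ → ℝ)
    (hτ11 : ∀ ξ η, τ11 ξ η = β 0 + β 3 * η + β 5 * ξ)
    (hτ22 : ∀ ξ η, τ22 ξ η = β 1 + β 4 * ξ + β 6 * η)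
    (hτ12 : ∀ ξ η, τ12 ξ η = β 2 + β 3 * ((b1 ^ 2 * ξ + b1 * b2 * η) / J0)
        + β 4 * ((a1 * a2 * ξ + a2 ^ 2 * η) / J0)
        - β 5 * ((b1 * b2 * ξ + b2 ^ 2 * η) / J0)
        - β 6 * ((a1 ^ 2 * ξ + a1 * a2 * η) / J0)) :
    ∀ ξ ∈ Set.Icc (-1 : ℝ) 1, ∀ η ∈ Set.Icc (-1 : ℝ) 1,
      (b2 * deriv (fun s => τ11 s η) ξ - b1 * deriv (fun t => τ11 ξ t) η
        + a1 * deriv (fun t => τ12 ξ t) η - a2 * deriv (fun s => τ12 s η) ξ = 0) ∧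
      (b2 * deriv (fun s => τ12 s η) ξ - b1 * deriv (fun t => τ12 ξ t) η
        + a1 * deriv (fun t => τ22 ξ t) η - a2 * deriv (fun s => τ22 s η) ξ = 0) := by
  intro ξ _ η _
  have d1 : deriv (fun s => τ11 s η) ξ = β 5 := by
    have h : (fun s => τ11 s η) = fun s => (β 0 + β 3 * η) + β 5 * s := by
      funext s; rw [hτ11]; try ring
    rw [h, deriv_affine]
  have d2 : deriv (fun t => τ11 ξ t) η = β 3 := by
    have h : (fun t => τ11 ξ t) = fun t => (β 0 + β 5 * ξ) + β 3 * t := by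
      funext t; rw [hτ11]; try ring
    rw [h, deriv_affine]
  have d3 : deriv (fun t => τ22 ξ t) η = β 6 := by
    have h : (fun t => τ22 ξ t) = fun t => (β 1 + β 4 * ξ) + β 6 * t := by
      funext t; rw [hτ22]; try ring
    rw [h, deriv_affine]
  have d4 : deriv (fun s => τ22 s η) ξ = β 4 := by
    have h : (fun s => τ22 s η) = fun s => (β 1 + β 6 * η) + β 4 * s := by
      funext s; rw [hτ22]; try ring
    rw [h, deriv_affine]
  have d5 : deriv (fun s => τ12 s η) ξ
      = (β 3 * b1 ^ 2 + β 4 * (a1 * a2) - β 5 * (b1 * b2) - β 6 * a1 ^ 2) / J0 := by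
    have h : (fun s => τ12 s η)
        = fun s => (β 2 + (β 3 * (b1 * b2) + β 4 * a2 ^ 2 - β 5 * b2 ^ 2 - β 6 * (a1 * a2)) / J0 * η)
          + (β 3 * b1 ^ 2 + β 4 * (a1 * a2) - β 5 * (b1 * b2) - β 6 * a1 ^ 2) / J0 * s := by
      funext s; rw [hτ12]; field_simp; try ring
    rw [h, deriv_affine]
  have d6 : deriv (fun t => τ12 ξ t) η
      = (β 3 * (b1 * b2) + β 4 * a2 ^ 2 - β 5 * b2 ^ 2 - β 6 * (a1 * a2)) / J0 := by
    have h : (fun t => τ12 ξ t)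
        = fun t => (β 2 + (β 3 * b1 ^ 2 + β 4 * (a1 * a2) - β 5 * (b1 * b2) - β 6 * a1 ^ 2) / J0 * ξ)
          + (β 3 * (b1 * b2) + β 4 * a2 ^ 2 - β 5 * b2 ^ 2 - β 6 * (a1 * a2)) / J0 * t := by
      funext t; rw [hτ12]; field_simp; try ring
    rw [h, deriv_affine]
  rw [d1, d2, d3, d4, d5, d6]
  subst hJ0
  constructor
  · linear_combination (b1 * β 3 - b2 * β 5) * mul_inv_cancel₀ hJ0ne
  · linear_combination (a2 * β 4 - a1 * β 6) * mul_inv_cancel₀ hJ0ne
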